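/- Let M = {p_n : n ≥ 1} with metric d(p_n,p_m) = 1 + 1/max(n,m) for n ≠ m. Then there does not exist a sequence (f_n) in Lip₀(M) of strongly norm-attaining functions that is isometrically equivalent to the canonical basis of c₀; that is, c₀ does not embed isometrically into SNA(M). -/

import Mathlib

/-- The metric of Theorem 4.1: `d(pₙ,pₘ) = 1 + 1/max(n,m)` for `n ≠ m`. -/
noncomputable def dUD (n m : ℕ+) : ℝ :=
  if n = m then 0 else 1 + 1 / ((max n m : ℕ+) : ℝ)

/-- `L` is the (least) Lipschitz norm of `f` with respect to the distance `dUD`. -/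
def LipNormEqD (f : ℕ+ → ℝ) (L : ℝ) : Prop :=
  (∀ p q : ℕ+, |f p - f q| ≤ L * dUD p q) ∧
  ∀ L' : ℝ, 0 ≤ L' → (∀ p q : ℕ+, |f p - f q| ≤ L' * dUD p q) → L ≤ L'

lemma dUD_comm (x y : ℕ+) : dUD x y = dUD y x := by
  unfold dUD
  rcases eq_or_ne x y with h | h
  · simp [h]
  · rw [if_neg h, if_neg h.symm, max_comm]

lemma dUD_self (x : ℕ+) : dUD x x = 0 := by simp [dUD]

lemma two_le_max {x y : ℕ+} (h : x ≠ y) : (2 : ℝ) ≤ ((max x y : ℕ+) : ℝ) := by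
  have hx : (1 : ℕ) ≤ (x : ℕ) := x.one_le
  have hy : (1 : ℕ) ≤ (y : ℕ) := y.one_le
  have hxy : (x : ℕ) ≠ (y : ℕ) := fun hc => h (PNat.coe_injective hc)
  have h1 : (x : ℕ) ≤ ((max x y : ℕ+) : ℕ) := (PNat.coe_le_coe _ _).mpr (le_max_left x y)
  have h2 : (y : ℕ) ≤ ((max x y : ℕ+) : ℕ) := (PNat.coe_le_coe _ _).mpr (le_max_right x y)
  have : (2 : ℕ) ≤ ((max x y : ℕ+) : ℕ) := by omega
  exact_mod_cast this

lemma one_lt_dUD {x y : ℕ+} (h : x ≠ y) : 1 < dUD x y := by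
  have h2 := two_le_max h
  unfold dUD
  rw [if_neg h]
  have : 0 < 1 / ((max x y : ℕ+) : ℝ) := by positivity
  linarith

lemma dUD_nonneg (x y : ℕ+) : 0 ≤ dUD x y := by
  rcases eq_or_ne x y with h | h
  · simp [h, dUD_self]
  · linarith [one_lt_dUD h]

lemma dUD_le (x y : ℕ+) : dUD x y ≤ 3 / 2 := by
  rcases eq_or_ne x y with h | h
  · rw [h, dUD_self]; norm_num
  · have h2 := two_le_max h
    unfold dUD
    rw [if_neg h]
    have hpos : (0 : ℝ) < ((max x y : ℕ+) : ℝ) := by linarith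
    have : 1 / ((max x y : ℕ+) : ℝ) ≤ 1 / 2 := by
      apply one_div_le_one_div_of_le <;> linarith
    linarith

lemma dUD_of_lt {x y : ℕ+} (h : x < y) : dUD x y = 1 + 1 / ((y : ℕ+) : ℝ) := by
  unfold dUD
  rw [if_neg (ne_of_lt h), max_eq_right h.le]

/-- The key "parallelogram" inequality for two strongly attaining functions whose
`±1` combinations all have Lipschitz constant at most 1. -/
lemma cross (f g : ℕ+ → ℝ)
    (hfg : ∀ u v : ℕ+, |f u - f v| + |g u - g v| ≤ dUD u v)
    (p q r s : ℕ+)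
    (hf : |f p - f q| = dUD p q) (hg : |g r - g s| = dUD r s) :
    dUD p q + dUD r s ≤ dUD p r + dUD q s := by
  have hfr : f r = f s := by
    have h1 := hfg r s
    rw [hg] at h1
    have : |f r - f s| ≤ 0 := by linarith
    have := abs_nonpos_iff.mp this
    linarith [sub_eq_zero.mp this]
  have hgp : g p = g q := by
    have h1 := hfg p q
    rw [hf] at h1
    have : |g p - g q| ≤ 0 := by linarith
    have := abs_nonpos_iff.mp this
    linarith [sub_eq_zero.mp this]
  have t1 : |f p - f q| ≤ |f p - f r| + |f q - f s| := by
    have : f p - f q = (f p - f r) - (f q - f s) := by rw [hfr]; ring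
    rw [this]
    exact abs_sub _ _
  have t2 : |g r - g s| ≤ |g p - g r| + |g q - g s| := by
    have : g r - g s = -((g p - g r) - (g q - g s)) := by rw [hgp]; ring
    rw [this, abs_neg]
    exact abs_sub _ _
  calc dUD p q + dUD r s = |f p - f q| + |g r - g s| := by rw [hf, hg]
    _ ≤ (|f p - f r| + |g p - g r|) + (|f q - f s| + |g q - g s|) := by linarith
    _ ≤ dUD p r + dUD q s := add_le_add (hfg p r) (hfg q s)

lemma cross' (f g : ℕ+ → ℝ)
    (hfg : ∀ u v : ℕ+, |f u - f v| + |g u - g v| ≤ dUD u v)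
    (p q r s : ℕ+)
    (hf : |f p - f q| = dUD p q) (hg : |g r - g s| = dUD r s) :
    dUD p q + dUD r s ≤ dUD p s + dUD q r := by
  have hg' : |g s - g r| = dUD s r := by rw [abs_sub_comm, dUD_comm]; exact hg
  have := cross f g hfg p q s r hf hg'
  rwa [dUD_comm s r] at this

/-- Sorted core lemma: pairs are disjoint on their minima and the low point of the
second pair lies below the max of the first pair. -/
lemma core (f g : ℕ+ → ℝ)
    (hfg : ∀ u v : ℕ+, |f u - f v| + |g u - g v| ≤ dUD u v)
    {p q r s : ℕ+} (hpq : p < q) (hrs : r < s)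
    (hf : |f p - f q| = dUD p q) (hg : |g r - g s| = dUD r s) :
    p ≠ r ∧ r < q := by
  have hC := cross f g hfg p q r s hf hg
  have hC' := cross' f g hfg p q r s hf hg
  have h1 : 1 < dUD p q := one_lt_dUD (ne_of_lt hpq)
  have h2 : 1 < dUD r s := one_lt_dUD (ne_of_lt hrs)
  constructor
  · intro h
    subst h
    rw [dUD_self] at hC
    linarith [dUD_le q s]
  · by_contra hqr
    have hqr : q ≤ r := not_lt.mp hqr
    rcases eq_or_lt_of_le hqr with h | h
    · subst h
      rw [dUD_self] at hC'
      linarith [dUD_le p s]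
    · -- p < q < r < s
      have hpr : p < r := hpq.trans h
      have hqs : q < s := h.trans hrs
      rw [dUD_of_lt hpq, dUD_of_lt hrs, dUD_of_lt hpr, dUD_of_lt hqs] at hC
      have hq0 : (0 : ℝ) < ((q : ℕ+) : ℝ) := by exact_mod_cast q.pos
      have hr0 : (0 : ℝ) < ((r : ℕ+) : ℝ) := by exact_mod_cast r.pos
      have hstep : 1 / ((q : ℕ+) : ℝ) ≤ 1 / ((r : ℕ+) : ℝ) := by linarith
      have : ((r : ℕ+) : ℝ) ≤ ((q : ℕ+) : ℝ) := le_of_one_div_le_one_div hq0 hstep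
      have : (r : ℕ) ≤ (q : ℕ) := by exact_mod_cast this
      have : r ≤ q := this
      exact absurd h (not_lt.mpr this)

lemma pairs_lemma (f g : ℕ+ → ℝ)
    (hfg : ∀ u v : ℕ+, |f u - f v| + |g u - g v| ≤ dUD u v)
    (p q r s : ℕ+) (hpq : p ≠ q) (hrs : r ≠ s)
    (hf : |f p - f q| = dUD p q) (hg : |g r - g s| = dUD r s) :
    min p q ≠ min r s ∧ min r s < max p q := by
  have hf' : |f (min p q) - f (max p q)| = dUD (min p q) (max p q) := by
    rcases le_total p q with h | h
    · rw [min_eq_left h, max_eq_right h]; exact hf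
    · rw [min_eq_right h, max_eq_left h, abs_sub_comm, dUD_comm]; exact hf
  have hg' : |g (min r s) - g (max r s)| = dUD (min r s) (max r s) := by
    rcases le_total r s with h | h
    · rw [min_eq_left h, max_eq_right h]; exact hg
    · rw [min_eq_right h, max_eq_left h, abs_sub_comm, dUD_comm]; exact hg
  exact core f g hfg (min_lt_max.mpr hpq) (min_lt_max.mpr hrs) hf' hg'

lemma sum_two (i j : ℕ) (ε δ : ℝ) (f : ℕ → ℕ+ → ℝ) (z : ℕ+) :
    ((Finsupp.single i ε + Finsupp.single j δ).sum fun n a => a * f n z)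
      = ε * f i z + δ * f j z := by
  rw [Finsupp.sum_add_index' (fun a => zero_mul (f a z)) (fun a b₁ b₂ => add_mul b₁ b₂ (f a z)),
      Finsupp.sum_single_index (zero_mul (f i z)), Finsupp.sum_single_index (zero_mul (f j z))]

/-- There is no sequence of strongly norm-attaining Lipschitz functions on
`(ℕ+, dUD)` (vanishing at the base point `p₁`) which is isometrically equivalent to the
canonical basis of `c₀`. -/
theorem stmt8 :
    ¬∃ f : ℕ → ℕ+ → ℝ,
      (∀ n, f n 1 = 0) ∧
      -- isometrically equivalent to the canonical basis of c₀
      (∀ lam : ℕ →₀ ℝ,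
        LipNormEqD (fun z => lam.sum fun n a => a * f n z) (⨆ n, |lam n|)) ∧
      -- each `f n` (which then has Lipschitz norm 1) strongly attains its norm
      (∀ n, ∃ p q : ℕ+, p ≠ q ∧ |f n p - f n q| = dUD p q) := by
  rintro ⟨f, hf0, hlam, hatt⟩
  choose P Q hne hat using hatt
  -- key constraint for two distinct indices
  have key : ∀ i j : ℕ, i ≠ j → ∀ u v : ℕ+,
      |f i u - f i v| + |f j u - f j v| ≤ dUD u v := by
    intro i j hij u v
    set x := f i u - f i v with hx
    set y := f j u - f j v with hy
    set ε : ℝ := if 0 ≤ x then 1 else -1 with hε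
    set δ : ℝ := if 0 ≤ y then 1 else -1 with hδ
    have hε1 : |ε| = 1 := by rw [hε]; split_ifs <;> norm_num
    have hδ1 : |δ| = 1 := by rw [hδ]; split_ifs <;> norm_num
    have hεx : ε * x = |x| := by
      rw [hε]; split_ifs with h
      · rw [one_mul, abs_of_nonneg h]
      · rw [neg_one_mul, abs_of_neg (not_le.mp h)]
    have hδy : δ * y = |y| := by
      rw [hδ]; split_ifs with h
      · rw [one_mul, abs_of_nonneg h]
      · rw [neg_one_mul, abs_of_neg (not_le.mp h)]
    set lam : ℕ →₀ ℝ := Finsupp.single i ε + Finsupp.single j δ with hlamdef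
    have habs : ∀ n, |lam n| ≤ 1 := by
      intro n
      rw [hlamdef]
      simp only [Finsupp.add_apply, Finsupp.single_apply]
      split_ifs with h1 h2 h2
      · exact absurd (h1.trans h2.symm) hij
      · rw [add_zero, hε1]
      · rw [zero_add, hδ1]
      · norm_num
    have hlami : lam i = ε := by
      rw [hlamdef]
      simp [Finsupp.single_apply, (Ne.symm hij : j ≠ i)]
    have hbdd : BddAbove (Set.range fun n => |lam n|) := by
      refine ⟨1, ?_⟩
      rintro w ⟨n, rfl⟩
      exact habs n
    have hsup : (⨆ n, |lam n|) = 1 := by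
      refine le_antisymm (ciSup_le habs) ?_
      have h1 : |lam i| = 1 := by rw [hlami, hε1]
      calc (1 : ℝ) = |lam i| := h1.symm
        _ ≤ ⨆ n, |lam n| := le_ciSup hbdd i
    have H := hlam lam
    unfold LipNormEqD at H
    have H1 := H.1 u v
    rw [hsup, one_mul] at H1
    simp only [hlamdef, sum_two i j ε δ f] at H1
    have hsum : |x| + |y| ≤ dUD u v := by
      have heq : |x| + |y| = (ε * f i u + δ * f j u) - (ε * f i v + δ * f j v) := by
        rw [← hεx, ← hδy, hx, hy]; ring
      calc |x| + |y| = (ε * f i u + δ * f j u) - (ε * f i v + δ * f j v) := heq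
        _ ≤ |(ε * f i u + δ * f j u) - (ε * f i v + δ * f j v)| := le_abs_self _
        _ ≤ dUD u v := H1
    exact hsum
  have main : ∀ i j : ℕ, i ≠ j →
      min (P i) (Q i) ≠ min (P j) (Q j) ∧ min (P j) (Q j) < max (P i) (Q i) :=
    fun i j hij =>
      pairs_lemma (f i) (f j) (key i j hij) (P i) (Q i) (P j) (Q j)
        (hne i) (hne j) (hat i) (hat j)
  set m0 : ℕ+ := max (P 0) (Q 0) with hm0
  have hlt : ∀ n : ℕ, min (P n) (Q n) < m0 := by
    intro n
    rcases eq_or_ne n 0 with rfl | h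
    · exact min_lt_max.mpr (hne 0)
    · exact (main 0 n (Ne.symm h)).2
  have hcard := Finset.card_le_card_of_injOn
      (fun n => ((min (P n) (Q n) : ℕ+) : ℕ))
      (s := Finset.range ((m0 : ℕ) + 1)) (t := Finset.Ico 1 (m0 : ℕ))
      (by
        intro n _
        rw [Finset.mem_coe, Finset.mem_Ico]
        exact ⟨(min (P n) (Q n)).one_le, (PNat.coe_lt_coe _ _).mpr (hlt n)⟩)
      (by
        intro a _ b _ hab
        by_contra hne'
        exact (main a b hne').1 (PNat.coe_injective hab))
  rw [Finset.card_range, Nat.card_Ico] at hcard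
  have := m0.one_le
  omega
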